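/- Let f, Λ, R_t ∈ F[x, y], let r be a function from the points of the Hermitian curve to F, and let t be a nonnegative integer. Suppose that R_t(α, β) = r(α,β)^t for every curve point (α, β), and that Λ(α, β) = 0 for every curve point (α, β) with r(α,β) ≠ f(α, β). Then the polynomial Λ · (R_t − f^t) lies in the ideal of F[x, y] generated by x^{q²} − x and y^q + y − x^{q+1}. -/

import Mathlib

namespace HermitianAux

open Polynomial

noncomputable def herPhi (F : Type) [Field F] :
    Polynomial (Polynomial F) →+* MvPolynomial (Fin 2) F :=
  Polynomial.eval₂RingHom
    (Polynomial.eval₂RingHom MvPolynomial.C (MvPolynomial.X 0)) (MvPolynomial.X 1)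

noncomputable def herPsi (F : Type) [Field F] :
    MvPolynomial (Fin 2) F →+* Polynomial (Polynomial F) :=
  MvPolynomial.eval₂Hom (Polynomial.C.comp Polynomial.C)
    ![Polynomial.C Polynomial.X, Polynomial.X]

lemma herPhi_psi (F : Type) [Field F] (g : MvPolynomial (Fin 2) F) :
    herPhi F (herPsi F g) = g := by
  have : (herPhi F).comp (herPsi F) = RingHom.id _ := by
    apply MvPolynomial.ringHom_ext
    · intro a
      simp [herPhi, herPsi]
    · intro i
      fin_cases i <;> simp [herPhi, herPsi]
  exact RingHom.congr_fun this g

lemma herPhi_eval (F : Type) [Field F] (α β : F) (P : Polynomial (Polynomial F)) :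
    MvPolynomial.eval ![α, β] (herPhi F P) =
      Polynomial.eval₂ (Polynomial.evalRingHom α) β P := by
  have h1 : (MvPolynomial.eval ![α, β]) (herPhi F P)
      = Polynomial.eval₂ ((MvPolynomial.eval ![α,β] : MvPolynomial (Fin 2) F →+* F).comp
          (Polynomial.eval₂RingHom MvPolynomial.C (MvPolynomial.X 0)))
          (MvPolynomial.eval ![α,β] (MvPolynomial.X 1)) P := by
    simpa [herPhi] using Polynomial.hom_eval₂ P
      (Polynomial.eval₂RingHom MvPolynomial.C (MvPolynomial.X 0))
      (MvPolynomial.eval ![α, β] : MvPolynomial (Fin 2) F →+* F) (MvPolynomial.X 1)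
  rw [h1]
  have h2 : ((MvPolynomial.eval ![α,β] : MvPolynomial (Fin 2) F →+* F).comp
      (Polynomial.eval₂RingHom MvPolynomial.C (MvPolynomial.X 0)))
      = Polynomial.evalRingHom α := by
    apply Polynomial.ringHom_ext <;> simp
  rw [h2]
  simp

lemma herm_charP (p e : ℕ) (hp : p.Prime) (he : 0 < e) (q : ℕ) (hq : q = p ^ e)
    (F : Type) [Field F] [Fintype F] (hF : Fintype.card F = q ^ 2) : CharP F p := by
  haveI : Fact p.Prime := ⟨hp⟩
  have hdvd : p ∣ ringChar F := by
    rw [prime_dvd_char_iff_dvd_card, hF, hq, ← pow_mul]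
    exact dvd_pow_self p (by positivity)
  have hprime : (ringChar F).Prime := CharP.char_is_prime F (ringChar F)
  have : ringChar F = p := ((Nat.prime_dvd_prime_iff_eq hp hprime).mp hdvd).symm
  exact this ▸ ringChar.charP F

lemma herm_fiber (p e : ℕ) (hp : p.Prime) (he : 0 < e) (q : ℕ) (hq : q = p ^ e)
    (F : Type) [Field F] [Fintype F] [CharP F p] (hF : Fintype.card F = q ^ 2)
    (α : F) :
    ∃ s : Finset F, q ≤ s.card ∧ ∀ β ∈ s, β ^ q + β = α ^ (q + 1) := by
  classical
  haveI : Fact p.Prime := ⟨hp⟩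
  have hq1 : 1 < q := hq ▸ Nat.one_lt_pow he.ne' hp.one_lt
  have hq2 : 1 < q ^ 2 := one_lt_pow₀ hq1 (by norm_num)
  set c : F := α ^ (q + 1) with hc_def
  have hc : c ^ q = c := by
    have hα : α ^ (q ^ 2) = α := by
      conv_rhs => rw [← FiniteField.pow_card α, hF]
    calc c ^ q = α ^ (q ^ 2) * α ^ q := by
          rw [hc_def, ← pow_mul, add_mul, one_mul, pow_add, sq]
      _ = α * α ^ q := by rw [hα]
      _ = c := by rw [hc_def, pow_add, pow_one, mul_comm]
  set hα : F[X] := X ^ q + X - C c with hα_def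
  set PB : F[X] := X ^ (q ^ 2) - X with hPB_def
  have hdvd : hα ∣ PB := by
    have h1 : (X : F[X]) - C c ∣ X ^ q - X := by
      rw [dvd_iff_isRoot]
      simp [IsRoot, hc]
    obtain ⟨k, hk⟩ := h1
    refine ⟨k.comp (X ^ q + X), ?_⟩
    have hcomp1 : ((X : F[X]) ^ q - X).comp (X ^ q + X) = PB := by
      rw [sub_comp, X_comp, pow_comp, X_comp, hPB_def]
      have : ((X : F[X]) ^ q + X) ^ q = (X ^ q) ^ q + X ^ q := by
        rw [hq]; exact add_pow_char_pow ..
      rw [this, ← pow_mul, ← sq]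
      ring
    have hcomp2 : ((X : F[X]) - C c).comp (X ^ q + X) = hα := by
      simp [hα_def]
    calc PB = ((X : F[X]) ^ q - X).comp (X ^ q + X) := hcomp1.symm
      _ = (((X : F[X]) - C c) * k).comp (X ^ q + X) := by rw [← hk]
      _ = hα * k.comp (X ^ q + X) := by rw [mul_comp, hcomp2]
  have hPBne : PB ≠ 0 := FiniteField.X_pow_card_sub_X_ne_zero F hq2
  have hPBroots : PB.roots = Finset.univ.val := by
    have := FiniteField.roots_X_pow_card_sub_X F
    rwa [hF] at this
  have hαmonic : hα.Monic := by
    have : hα = X ^ q + (X - C c) := by rw [hα_def]; ring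
    rw [this]
    exact monic_X_pow_add (by
      apply lt_of_le_of_lt (degree_X_sub_C_le c)
      exact_mod_cast hq1)
  have hαdeg : hα.natDegree = q := by
    have hd : hα.degree = q := by
      have : hα = X ^ q + (X - C c) := by rw [hα_def]; ring
      rw [this, degree_add_eq_left_of_degree_lt, degree_X_pow]
      rw [degree_X_pow]
      exact lt_of_le_of_lt (degree_X_sub_C_le c) (by exact_mod_cast hq1)
    exact natDegree_eq_of_degree_eq_some hd
  have hPBdeg : PB.natDegree = q ^ 2 := FiniteField.X_pow_card_sub_X_natDegree_eq F hq2
  obtain ⟨w, hw⟩ := hdvd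
  have hwne : w ≠ 0 := by
    rintro rfl; rw [mul_zero] at hw; exact hPBne hw
  have hαne : hα ≠ 0 := hαmonic.ne_zero
  have hwdeg : w.natDegree = q ^ 2 - q := by
    have := natDegree_mul hαne hwne
    rw [← hw, hPBdeg, hαdeg] at this
    omega
  have hrootsmul : PB.roots = hα.roots + w.roots := by rw [hw, roots_mul (hw ▸ hPBne)]
  have hcardPB : Multiset.card PB.roots = q ^ 2 := by
    rw [hPBroots, ← hF]; exact Finset.card_univ
  have hcardw : Multiset.card w.roots ≤ q ^ 2 - q := le_trans (card_roots' w) (le_of_eq hwdeg)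
  have hcardα : q ≤ Multiset.card hα.roots := by
    have h1 := congrArg Multiset.card hrootsmul
    rw [hcardPB, Multiset.card_add] at h1
    have h3 : q ≤ q ^ 2 := Nat.le_self_pow (by norm_num) q
    omega
  have hnodup : hα.roots.Nodup := by
    refine Multiset.nodup_of_le (roots.le_of_dvd hPBne ⟨w, hw⟩) ?_
    rw [hPBroots]; exact Finset.univ.nodup
  refine ⟨hα.roots.toFinset, ?_, ?_⟩
  · rwa [Multiset.toFinset_card_of_nodup hnodup]
  · intro β hβ
    rw [Multiset.mem_toFinset, mem_roots hαne] at hβ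
    have := hβ
    rw [IsRoot, hα_def] at this
    simp at this
    linear_combination this

lemma herm_dvd_of_eval_zero (q : ℕ) (hq2 : 1 < q ^ 2)
    (F : Type) [Field F] [Fintype F] (hF : Fintype.card F = q ^ 2)
    (c : F[X]) (hc : ∀ α : F, c.eval α = 0) : (X ^ (q ^ 2) - X : F[X]) ∣ c := by
  classical
  by_cases h0 : c = 0
  · simp [h0]
  set PB : F[X] := X ^ (q ^ 2) - X with hPB_def
  have hPBne : PB ≠ 0 := FiniteField.X_pow_card_sub_X_ne_zero F hq2
  have hPBroots : PB.roots = Finset.univ.val := by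
    have := FiniteField.roots_X_pow_card_sub_X F
    rwa [hF] at this
  have hPBmonic : PB.Monic := by
    have : PB = X ^ (q ^ 2) + (-X) := by rw [hPB_def]; ring
    rw [this]
    exact monic_X_pow_add (by
      rw [degree_neg]
      exact lt_of_le_of_lt degree_X_le (by exact_mod_cast hq2))
  have hPBdeg : PB.natDegree = q ^ 2 := FiniteField.X_pow_card_sub_X_natDegree_eq F hq2
  have hfact : (PB.roots.map fun a => X - C a).prod = PB := by
    apply prod_multiset_X_sub_C_of_monic_of_roots_card_eq hPBmonic
    rw [hPBroots, hPBdeg, ← hF]; exact Finset.card_univ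
  have hle : PB.roots ≤ c.roots := by
    rw [hPBroots, Multiset.le_iff_count]
    intro a
    rw [count_roots]
    have h1 : Multiset.count a Finset.univ.val = 1 :=
      Multiset.count_eq_one_of_mem Finset.univ.nodup (Finset.mem_univ a)
    rw [h1]
    exact (rootMultiplicity_pos h0).mpr (hc a)
  have := (Multiset.prod_X_sub_C_dvd_iff_le_roots h0 PB.roots).mpr hle
  rwa [hfact] at this

/-- Main vanishing-ideal lemma. -/
lemma herm_mem_span (p e : ℕ) (hp : p.Prime) (he : 0 < e) (q : ℕ) (hq : q = p ^ e)
    (F : Type) [Field F] [Fintype F] (hF : Fintype.card F = q ^ 2)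
    (g : MvPolynomial (Fin 2) F)
    (hg : ∀ α β : F, β ^ q + β = α ^ (q + 1) → MvPolynomial.eval ![α, β] g = 0) :
    g ∈ Ideal.span {(MvPolynomial.X 0 : MvPolynomial (Fin 2) F) ^ (q ^ 2) - MvPolynomial.X 0,
      (MvPolynomial.X 1 : MvPolynomial (Fin 2) F) ^ q + MvPolynomial.X 1
        - (MvPolynomial.X 0) ^ (q + 1)} := by
  classical
  haveI : CharP F p := herm_charP p e hp he q hq F hF
  haveI : Fact p.Prime := ⟨hp⟩
  have hq1 : 1 < q := hq ▸ Nat.one_lt_pow he.ne' hp.one_lt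
  have hq2 : 1 < q ^ 2 := one_lt_pow₀ hq1 (by norm_num)
  set A := Polynomial F
  set m : Polynomial A := X ^ q + X - Polynomial.C (X ^ (q + 1)) with hm_def
  have hm_eq : m = X ^ q + (X - Polynomial.C ((X : A) ^ (q + 1))) := by rw [hm_def]; ring
  have hmmonic : m.Monic := by
    rw [hm_eq]
    exact monic_X_pow_add (lt_of_le_of_lt (degree_X_sub_C_le _) (by exact_mod_cast hq1))
  have hmdeg : m.natDegree = q := by
    have hd : m.degree = q := by
      rw [hm_eq, degree_add_eq_left_of_degree_lt, degree_X_pow]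
      rw [degree_X_pow]
      exact lt_of_le_of_lt (degree_X_sub_C_le _) (by exact_mod_cast hq1)
    exact natDegree_eq_of_degree_eq_some hd
  have hmne1 : m ≠ 1 := by
    intro h; rw [h, natDegree_one] at hmdeg; omega
  set P : Polynomial A := herPsi F g with hP_def
  set P' : Polynomial A := P %ₘ m with hP'_def
  have hP'deg : P'.natDegree < q := hmdeg ▸ natDegree_modByMonic_lt P hmmonic hmne1
  -- evaluation of P' vanishes at every point of F × (fiber)
  have hP'eval : ∀ α : F, ∀ i : ℕ, (P'.coeff i).eval α = 0 := by
    intro α i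
    obtain ⟨s, hs_card, hs⟩ := herm_fiber p e hp he q hq F hF α
    set Q : F[X] := P'.map (Polynomial.evalRingHom α) with hQ_def
    have hQzero : Q = 0 := by
      apply Polynomial.eq_zero_of_natDegree_lt_card_of_eval_eq_zero' Q s
      · intro β hβ
        have hcurve : β ^ q + β = α ^ (q + 1) := hs β hβ
        have hevP : Polynomial.eval₂ (Polynomial.evalRingHom α) β P = 0 := by
          rw [← herPhi_eval, herPhi_psi]
          exact hg α β hcurve
        have hevm : Polynomial.eval₂ (Polynomial.evalRingHom α) β m = 0 := by
          rw [hm_def]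
          simp [hcurve, Polynomial.eval₂_pow]
        have hdecomp : P' + m * (P /ₘ m) = P := modByMonic_add_div P m
        have := congrArg (Polynomial.eval₂ (Polynomial.evalRingHom α) β) hdecomp
        rw [eval₂_add, eval₂_mul, hevm, zero_mul, add_zero, hevP] at this
        rw [hQ_def, Polynomial.eval_map]
        exact this
      · calc Q.natDegree ≤ P'.natDegree := natDegree_map_le
          _ < q := hP'deg
          _ ≤ s.card := hs_card
    have := congrArg (fun r => Polynomial.coeff r i) hQzero
    simpa [hQ_def, Polynomial.coeff_map] using this
  -- hence each coefficient is divisible by X^(q^2) - X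
  have hCdvd : Polynomial.C ((X : A) ^ (q ^ 2) - X) ∣ P' := by
    rw [Polynomial.C_dvd_iff_dvd_coeff]
    intro i
    exact herm_dvd_of_eval_zero q hq2 F hF _ (fun α => hP'eval α i)
  obtain ⟨w', hw'⟩ := hCdvd
  -- assemble
  have hgdecomp : g = herPhi F (Polynomial.C ((X : A) ^ (q ^ 2) - X)) * herPhi F w'
      + herPhi F m * herPhi F (P /ₘ m) := by
    conv_lhs => rw [← herPhi_psi F g, ← hP_def, ← modByMonic_add_div P m, ← hP'_def, hw']
    rw [map_add, map_mul, map_mul]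
  have hphi1 : herPhi F (Polynomial.C ((X : A) ^ (q ^ 2) - X))
      = (MvPolynomial.X 0 : MvPolynomial (Fin 2) F) ^ (q ^ 2) - MvPolynomial.X 0 := by
    simp [herPhi, Polynomial.eval₂_pow]
  have hphi2 : herPhi F m
      = (MvPolynomial.X 1 : MvPolynomial (Fin 2) F) ^ q + MvPolynomial.X 1
        - (MvPolynomial.X 0) ^ (q + 1) := by
    simp [herPhi, hm_def, Polynomial.eval₂_C, Polynomial.eval₂_X, Polynomial.eval₂_pow]
  rw [Ideal.mem_span_pair]
  refine ⟨herPhi F w', herPhi F (P /ₘ m), ?_⟩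
  rw [hgdecomp, hphi1, hphi2]
  ring

end HermitianAux

open MvPolynomial

theorem stmt_9 (p e : ℕ) (hp : p.Prime) (he : 0 < e) (q : ℕ) (hq : q = p ^ e)
    (F : Type) [Field F] [Fintype F] (hF : Fintype.card F = q ^ 2)
    (f Λ Rt : MvPolynomial (Fin 2) F) (r : F × F → F) (t : ℕ)
    (hR : ∀ α β : F, β ^ q + β = α ^ (q + 1) →
      MvPolynomial.eval ![α, β] Rt = (r (α, β)) ^ t)
    (hΛ : ∀ α β : F, β ^ q + β = α ^ (q + 1) →
      r (α, β) ≠ MvPolynomial.eval ![α, β] f → MvPolynomial.eval ![α, β] Λ = 0) :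
    Λ * (Rt - f ^ t) ∈ Ideal.span {(X 0 : MvPolynomial (Fin 2) F) ^ (q ^ 2) - X 0,
      (X 1 : MvPolynomial (Fin 2) F) ^ q + X 1 - (X 0) ^ (q + 1)} := by
  apply HermitianAux.herm_mem_span p e hp he q hq F hF
  intro α β hcurve
  rw [map_mul]
  by_cases h : r (α, β) = MvPolynomial.eval ![α, β] f
  · have : MvPolynomial.eval ![α, β] (Rt - f ^ t) = 0 := by
      rw [map_sub, map_pow, hR α β hcurve, h]
      ring
    rw [this, mul_zero]
  · rw [hΛ α β hcurve h, zero_mul]
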